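/- Under the fast time-scale controller, the fast time-scale state at the beginning of every slow time-scale period equals the slow time-scale state generated by the affine policy driven by the period-averaged disturbance trajectory: for every t = 0,…,T−1, x(0,t) = x(0) + B·Σ_{s=0}^{t−1} ( ū(s) + Σ_{r=0}^{s} Q(s,r) ξ̄(r) ), and moreover x(K,T−1) = x(0) + B·Σ_{s=0}^{T−1} ( ū(s) + Σ_{r=0}^{s} Q(s,r) ξ̄(r) ). -/

import Mathlib

/-- Slow time-scale average `ξ̄(t) = (1/K)·Σ_{ℓ=0}^{K−1} ξ(ℓ,t)` of a fast
time-scale disturbance process `ξ(k,t)`. -/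
noncomputable def slowAvg {ι : Type*} (K : ℕ) (ξ : ℕ → ℕ → ι → ℝ) (t : ℕ) :
    ι → ℝ :=
  (K : ℝ)⁻¹ • ∑ ℓ ∈ Finset.range K, ξ ℓ t

/-- Fast time-scale input
`u(k,t) = ū(t) + Q(t,t) ξ(k,t) + Σ_{s=0}^{t−1} Q(t,s) ξ̄(s)`.  Inputs live in
`ℝ^{2n} ≃ (Fin n × Fin 2 → ℝ)` and disturbance blocks in
`ℝ^{3n} ≃ (Fin n × Fin 3 → ℝ)`. -/
noncomputable def ufast {n : ℕ} (K : ℕ) (ubar : ℕ → Fin n × Fin 2 → ℝ)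
    (Q : ℕ → ℕ → Matrix (Fin n × Fin 2) (Fin n × Fin 3) ℝ)
    (ξ : ℕ → ℕ → Fin n × Fin 3 → ℝ) (k t : ℕ) : Fin n × Fin 2 → ℝ :=
  ubar t + (Q t t).mulVec (ξ k t)
    + ∑ s ∈ Finset.range t, (Q t s).mulVec (slowAvg K ξ s)

/-- under the fast time-scale controller, the fast time-scale
state at the beginning of every slow time-scale period equals the slow
time-scale state generated by the affine policy driven by the period-averaged
disturbance trajectory:
`x(0,t) = x(0) + B·Σ_{s<t} (ū(s) + Σ_{r≤s} Q(s,r) ξ̄(r))` for `t = 0,…,T−1`,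
and `x(K,T−1) = x(0) + B·Σ_{s<T} (ū(s) + Σ_{r≤s} Q(s,r) ξ̄(r))`. -/
theorem statement_4 (n T K : ℕ) (hn : 0 < n) (hT : 0 < T) (hK : 0 < K)
    (ξ : ℕ → ℕ → Fin n × Fin 3 → ℝ)
    (ubar : ℕ → Fin n × Fin 2 → ℝ)
    (Q : ℕ → ℕ → Matrix (Fin n × Fin 2) (Fin n × Fin 3) ℝ)
    (B : Matrix (Fin n) (Fin n × Fin 2) ℝ) (x0 : Fin n → ℝ)
    (xf : ℕ → ℕ → Fin n → ℝ)
    (hx00 : xf 0 0 = x0)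
    (hstep : ∀ t < T, ∀ k < K,
      xf (k + 1) t = xf k t + (K : ℝ)⁻¹ • B.mulVec (ufast K ubar Q ξ k t))
    (hbdry : ∀ t, t + 1 < T → xf 0 (t + 1) = xf K t) :
    (∀ t < T, xf 0 t = x0 + B.mulVec (∑ s ∈ Finset.range t,
      (ubar s + ∑ r ∈ Finset.range (s + 1), (Q s r).mulVec (slowAvg K ξ r))))
    ∧ xf K (T - 1) = x0 + B.mulVec (∑ s ∈ Finset.range T,
      (ubar s + ∑ r ∈ Finset.range (s + 1), (Q s r).mulVec (slowAvg K ξ r))) := by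
  have hKne : (K : ℝ) ≠ 0 := Nat.cast_ne_zero.mpr hK.ne'
  -- intra-period accumulation
  have hacc : ∀ t < T, ∀ k ≤ K, xf k t = xf 0 t +
      (K : ℝ)⁻¹ • B.mulVec (∑ ℓ ∈ Finset.range k, ufast K ubar Q ξ ℓ t) := by
    intro t ht k hk
    induction k with
    | zero => simp
    | succ k ih =>
        have hkK : k < K := Nat.lt_of_succ_le hk
        rw [hstep t ht k hkK, ih (Nat.le_of_lt hkK), Finset.sum_range_succ,
          Matrix.mulVec_add, smul_add, add_assoc]
  have hKsm : ∀ {m : Type} [inst : AddCommGroup m] [inst2 : Module ℝ m]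
      (v : m), K • (K : ℝ)⁻¹ • v = v := by
    intro m _ _ v
    rw [← Nat.cast_smul_eq_nsmul ℝ, smul_smul, mul_inv_cancel₀ hKne, one_smul]
  -- sum of inputs over a period
  have hsum : ∀ t, (∑ ℓ ∈ Finset.range K, ufast K ubar Q ξ ℓ t) =
      K • (ubar t + ∑ r ∈ Finset.range (t + 1), (Q t r).mulVec (slowAvg K ξ r)) := by
    intro t
    have h1 : (Q t t).mulVec (slowAvg K ξ t) =
        (K : ℝ)⁻¹ • (∑ ℓ ∈ Finset.range K, (Q t t).mulVec (ξ ℓ t)) := by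
      simp [slowAvg, Matrix.mulVec_smul, ← Matrix.mulVecLin_apply, map_sum, -Matrix.mulVecBilin_apply]
    rw [Finset.sum_range_succ]
    simp only [ufast, Finset.sum_add_distrib, Finset.sum_const, Finset.card_range,
      h1, smul_add, hKsm]
    abel
  -- full-period update
  have hfull : ∀ t < T, xf K t = xf 0 t + B.mulVec
      (ubar t + ∑ r ∈ Finset.range (t + 1), (Q t r).mulVec (slowAvg K ξ r)) := by
    intro t ht
    rw [hacc t ht K le_rfl, hsum t]
    congr 1
    rw [← Nat.cast_smul_eq_nsmul ℝ, Matrix.mulVec_smul, smul_smul,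
      inv_mul_cancel₀ hKne, one_smul]
  have main : ∀ t < T, xf 0 t = x0 + B.mulVec (∑ s ∈ Finset.range t,
      (ubar s + ∑ r ∈ Finset.range (s + 1), (Q s r).mulVec (slowAvg K ξ r))) := by
    intro t ht
    induction t with
    | zero => simp [hx00]
    | succ t ih =>
        have ht' : t < T := Nat.lt_of_succ_lt ht
        rw [hbdry t ht, hfull t ht', ih ht']
        conv_rhs => rw [Finset.sum_range_succ]
        simp [Matrix.mulVec_add, add_assoc]
  refine ⟨main, ?_⟩
  have hT1 : T - 1 < T := Nat.sub_lt hT one_pos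
  rw [hfull _ hT1, main _ hT1, add_assoc, ← Matrix.mulVec_add,
    ← Finset.sum_range_succ, Nat.sub_add_cancel hT]
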